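/- A rooted tree on a fixed vertex set N is uniquely determined by its set of leaves together with the family of level sets of all its leaves. That is, if two trees G = (N,E) and G' = (N,E') on the same vertex set and same root satisfy F(G) = F(G') and N_w^k(G) = N_w^k(G') for every leaf w and every 0 ≤ k ≤ d_w, then E = E'. -/

import Mathlib

open scoped Classical

/-- A finite rooted tree encoded by a parent function: every node reaches the
root by iterating `parent`, and the root is its own parent. -/
structure GridTree (V : Type) [Fintype V] [DecidableEq V] where
  root : V
  parent : V → V
  parent_root : parent root = root
  reaches : ∀ v, ∃ k, parent^[k] v = root

namespace GridTree

variable {V : Type} [Fintype V] [DecidableEq V]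

/-- Depth of a node: distance (number of edges) to the root. -/
noncomputable def depth (T : GridTree V) (v : V) : ℕ := Nat.find (T.reaches v)

/-- The depth-`k` ancestor `α_v^k` of `v` (for `k ≤ depth v`). -/
noncomputable def anc (T : GridTree V) (v : V) (k : ℕ) : V :=
  T.parent^[T.depth v - k] v

/-- Ancestor set `A_v`: all nodes on the path from the root to `v`, including `v`. -/
def ancSet (T : GridTree V) (v : V) : Set V := {u | ∃ j, T.parent^[j] v = u}

/-- Descendant set `D_n`: all nodes whose ancestor set contains `n`. -/
def desc (T : GridTree V) (n : V) : Set V := {m | n ∈ T.ancSet m}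

/-- The `k`-th level set `N_m^k` of node `m`. -/
noncomputable def level (T : GridTree V) (m : V) (k : ℕ) : Set V :=
  if k = T.depth m then T.desc m
  else T.desc (T.anc m k) \ T.desc (T.anc m (k + 1))

/-- A leaf: a node with no descendants other than itself. -/
def IsLeaf (T : GridTree V) (m : V) : Prop := T.desc m = {m}

/-- Path-resistance matrix: `R m n` is the sum of the resistances of edges with
both endpoints in `A_m ∩ A_n`.  The edge above a non-root node `c` (joining `c`
to its parent) has resistance `r c`. -/
noncomputable def Rmat (T : GridTree V) (r : V → ℝ) (m n : V) : ℝ :=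
  ∑ c : V, if c ∈ T.ancSet m ∧ c ∈ T.ancSet n ∧ c ≠ T.root then r c else 0

end GridTree

namespace GridTree

variable {V : Type} [Fintype V] [DecidableEq V] (T T' : GridTree V)

lemma depth_spec' (v : V) : T.parent^[T.depth v] v = T.root :=
  Nat.find_spec (T.reaches v)

lemma depth_min' {v : V} {i : ℕ} (h : i < T.depth v) : T.parent^[i] v ≠ T.root :=
  Nat.find_min (T.reaches v) h

lemma iterate_root (j : ℕ) : T.parent^[j] T.root = T.root :=
  Function.iterate_fixed T.parent_root j

lemma iterate_of_depth_le {v : V} {j : ℕ} (h : T.depth v ≤ j) :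
    T.parent^[j] v = T.root := by
  obtain ⟨i, rfl⟩ := Nat.exists_eq_add_of_le h
  rw [Nat.add_comm, Function.iterate_add_apply, depth_spec', iterate_root]

lemma depth_root : T.depth T.root = 0 :=
  Nat.eq_zero_of_le_zero (Nat.find_le (by simp))

lemma depth_iterate {v : V} {j : ℕ} (h : j ≤ T.depth v) :
    T.depth (T.parent^[j] v) = T.depth v - j := by
  rw [depth, Nat.find_eq_iff]
  constructor
  · rw [← Function.iterate_add_apply, Nat.sub_add_cancel h]
    exact T.depth_spec' v
  · intro i hi
    rw [← Function.iterate_add_apply]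
    exact T.depth_min' (by omega)

lemma mem_desc_iff {m n : V} : m ∈ T.desc n ↔ ∃ j, T.parent^[j] m = n := Iff.rfl

lemma mem_desc_self (n : V) : n ∈ T.desc n := ⟨0, rfl⟩

lemma desc_subset {m n : V} (h : m ∈ T.desc n) : T.desc m ⊆ T.desc n := by
  obtain ⟨j, hj⟩ := h
  rintro x ⟨i, hi⟩
  exact ⟨j + i, by rw [Function.iterate_add_apply, hi, hj]⟩

lemma spec_of_mem_desc {m n : V} (h : m ∈ T.desc n) :
    T.depth n ≤ T.depth m ∧ T.parent^[T.depth m - T.depth n] m = n := by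
  obtain ⟨j, rfl⟩ := h
  by_cases hj : j ≤ T.depth m
  · rw [T.depth_iterate hj]
    refine ⟨Nat.sub_le _ _, ?_⟩
    congr 1
    omega
  · rw [T.iterate_of_depth_le (le_of_not_ge hj), depth_root]
    exact ⟨Nat.zero_le _, by simpa using T.depth_spec' m⟩

lemma depth_le_of_mem {m n : V} (h : m ∈ T.desc n) : T.depth n ≤ T.depth m :=
  (T.spec_of_mem_desc h).1

lemma anc_eq_of_mem {n w : V} (h : w ∈ T.desc n) : T.anc w (T.depth n) = n :=
  (T.spec_of_mem_desc h).2

lemma desc_antisymm {m n : V} (h1 : m ∈ T.desc n) (h2 : n ∈ T.desc m) : m = n := by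
  have e1 := T.spec_of_mem_desc h1
  have e2 := T.spec_of_mem_desc h2
  have h0 : T.depth n - T.depth m = 0 := by omega
  have := e2.2
  rw [h0, Function.iterate_zero_apply] at this
  exact this.symm

lemma mem_desc_anc (w : V) (k : ℕ) : w ∈ T.desc (T.anc w k) := ⟨_, rfl⟩

lemma depth_anc {w : V} {k : ℕ} (h : k ≤ T.depth w) : T.depth (T.anc w k) = k := by
  rw [anc, T.depth_iterate (Nat.sub_le _ _)]
  omega

lemma anc_depth (w : V) : T.anc w (T.depth w) = w := by
  rw [anc, Nat.sub_self, Function.iterate_zero_apply]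

lemma desc_anc_succ_subset {w : V} {k : ℕ} (h : k + 1 ≤ T.depth w) :
    T.desc (T.anc w (k + 1)) ⊆ T.desc (T.anc w k) := by
  apply T.desc_subset
  refine ⟨1, ?_⟩
  show T.parent (T.parent^[T.depth w - (k + 1)] w) = T.parent^[T.depth w - k] w
  have e : T.depth w - k = T.depth w - (k + 1) + 1 := by omega
  rw [e, Function.iterate_succ_apply']

lemma desc_anc_eq_union {w : V} :
    ∀ n k, k + n = T.depth w →
      T.desc (T.anc w k) = ⋃ j ∈ Finset.Icc k (T.depth w), T.level w j := by
  intro n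
  induction n with
  | zero =>
    intro k hk
    have hk' : k = T.depth w := by omega
    have e : T.level w k = T.desc (T.anc w k) := by
      rw [level, if_pos hk', hk', T.anc_depth]
    ext x
    simp only [Set.mem_iUnion, Finset.mem_Icc, exists_prop]
    constructor
    · intro hx
      refine ⟨k, ⟨le_rfl, by omega⟩, ?_⟩
      rw [e]
      exact hx
    · rintro ⟨j, ⟨hj1, hj2⟩, hx⟩
      have hjk : j = k := by omega
      subst hjk
      rw [e] at hx
      exact hx
  | succ n ih =>
    intro k hk
    have h1 : k < T.depth w := by omega
    have e : T.desc (T.anc w k) = T.level w k ∪ T.desc (T.anc w (k + 1)) := by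
      rw [level, if_neg (by omega)]
      exact (Set.diff_union_of_subset (T.desc_anc_succ_subset h1)).symm
    rw [e, ih (k + 1) (by omega)]
    ext x
    simp only [Set.mem_union, Set.mem_iUnion, Finset.mem_Icc, exists_prop]
    constructor
    · rintro (h | ⟨j, ⟨hj1, hj2⟩, hx⟩)
      · exact ⟨k, ⟨le_rfl, h1.le⟩, h⟩
      · exact ⟨j, ⟨by omega, hj2⟩, hx⟩
    · rintro ⟨j, ⟨hj1, hj2⟩, hx⟩
      rcases eq_or_lt_of_le hj1 with h | h
      · subst h
        exact Or.inl hx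
      · exact Or.inr ⟨j, ⟨h, hj2⟩, hx⟩

lemma exists_leaf_mem_desc (n : V) : ∃ w ∈ T.desc n, T.IsLeaf w := by
  obtain ⟨w, hw, hmax⟩ := Set.Finite.exists_maximalFor T.depth (T.desc n)
    (Set.toFinite _) ⟨n, T.mem_desc_self n⟩
  refine ⟨w, hw, ?_⟩
  ext x
  simp only [Set.mem_singleton_iff]
  constructor
  · intro hx
    have h1 := T.depth_le_of_mem hx
    have h2 := hmax (T.desc_subset hw hx) h1
    have e := (T.spec_of_mem_desc hx).2
    rw [show T.depth x - T.depth w = 0 by omega, Function.iterate_zero_apply] at e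
    exact e
  · rintro rfl
    exact T.mem_desc_self x

lemma eq_root_of_parent_fixed {v : V} (h : T.parent v = v) : v = T.root := by
  have := T.depth_spec' v
  rwa [Function.iterate_fixed h] at this

variable {T T'}

lemma leaf_depth_eq
    (hlevel : ∀ w, T.IsLeaf w → ∀ k ≤ T.depth w, T.level w k = T'.level w k)
    {w : V} (hw : T.IsLeaf w) : T.depth w = T'.depth w := by
  by_contra hne
  have h := hlevel w hw (T.depth w) le_rfl
  have hwmem : w ∈ T.level w (T.depth w) := by
    rw [level, if_pos rfl]
    exact T.mem_desc_self w
  rw [h, level, if_neg hne] at hwmem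
  exact hwmem.2 (T'.mem_desc_anc w _)

lemma descA
    (hlevel : ∀ w, T.IsLeaf w → ∀ k ≤ T.depth w, T.level w k = T'.level w k)
    {w : V} {k : ℕ} (hw : T.IsLeaf w) (hk : k ≤ T.depth w) :
    T.desc (T.anc w k) = T'.desc (T'.anc w k) := by
  have hd := leaf_depth_eq hlevel hw
  rw [T.desc_anc_eq_union (T.depth w - k) k (by omega),
      T'.desc_anc_eq_union (T'.depth w - k) k (by omega), ← hd]
  exact Set.iUnion_congr fun j => Set.iUnion_congr fun hj =>
    hlevel w hw j (Finset.mem_Icc.mp hj).2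

lemma anc_eq
    (hlevel : ∀ w, T.IsLeaf w → ∀ k ≤ T.depth w, T.level w k = T'.level w k) :
    ∀ N : ℕ, ∀ w k, T.IsLeaf w → k ≤ T.depth w →
      (T.desc (T.anc w k)).ncard ≤ N → T.anc w k = T'.anc w k := by
  intro N
  induction N using Nat.strong_induction_on with
  | _ N ih =>
    intro w k hw hk hcard
    have hd := leaf_depth_eq hlevel hw
    rcases eq_or_lt_of_le hk with hkd | hklt
    · rw [hkd, T.anc_depth, hd, T'.anc_depth]
    by_contra hne
    have hb'lvl : T'.anc w k ∈ T'.level w k := by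
      rw [level, if_neg (by omega)]
      refine ⟨T'.mem_desc_self _, fun hmem => ?_⟩
      have hle := T'.depth_le_of_mem hmem
      rw [T'.depth_anc (by omega), T'.depth_anc (by omega)] at hle
      omega
    have hb'T : T'.anc w k ∈ T.desc (T.anc w k) := by
      have h := hb'lvl
      rw [← hlevel w hw k hk, level, if_neg (by omega)] at h
      exact h.1
    have hA := descA hlevel hw hk
    have hbnot : T.anc w k ∉ T.desc (T'.anc w k) := fun hmem =>
      hne (T.desc_antisymm hmem hb'T)
    have hss : T.desc (T'.anc w k) ⊂ T.desc (T.anc w k) := by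
      rw [Set.ssubset_def]
      exact ⟨T.desc_subset hb'T, fun h => hbnot (h (T.mem_desc_self _))⟩
    have hlt : (T.desc (T'.anc w k)).ncard < (T.desc (T.anc w k)).ncard :=
      Set.ncard_lt_ncard hss (Set.toFinite _)
    obtain ⟨w₂, hw₂mem, hw₂⟩ := T.exists_leaf_mem_desc (T'.anc w k)
    have hanc2 : T.anc w₂ (T.depth (T'.anc w k)) = T'.anc w k := T.anc_eq_of_mem hw₂mem
    have hk2 : T.depth (T'.anc w k) ≤ T.depth w₂ := T.depth_le_of_mem hw₂mem
    have hih := ih (T.desc (T'.anc w k)).ncard (by omega) w₂ (T.depth (T'.anc w k))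
      hw₂ hk2 (by rw [hanc2])
    have hA2 := descA hlevel hw₂ hk2
    rw [hanc2] at hih hA2
    rw [← hih] at hA2
    rw [← hA2] at hA
    exact hbnot (hA ▸ T.mem_desc_self (T.anc w k))

end GridTree

/-- Lemma 4: a rooted tree on a fixed vertex set is uniquely determined by its
leaf set together with the level sets of all its leaves. -/
theorem stmt8 {V : Type} [Fintype V] [DecidableEq V] (T T' : GridTree V)
    (hroot : T.root = T'.root)
    (hleaf : ∀ w, T.IsLeaf w ↔ T'.IsLeaf w)
    (hlevel : ∀ w, T.IsLeaf w → ∀ k ≤ T.depth w, T.level w k = T'.level w k) :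
    T.parent = T'.parent := by
  have hdesc : ∀ n, T.desc n = T'.desc n := by
    intro n
    obtain ⟨w, hwmem, hw⟩ := T.exists_leaf_mem_desc n
    have h1 : T.anc w (T.depth n) = n := T.anc_eq_of_mem hwmem
    have hk : T.depth n ≤ T.depth w := T.depth_le_of_mem hwmem
    have h2 := GridTree.anc_eq hlevel (T.desc (T.anc w (T.depth n))).ncard w
      (T.depth n) hw hk le_rfl
    have h3 := GridTree.descA hlevel hw hk
    rw [h1] at h2 h3
    rw [← h2] at h3
    exact h3
  funext v
  by_cases hv : v = T.root
  · subst hv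
    rw [T.parent_root, hroot, T'.parent_root]
  · have hv' : v ≠ T'.root := hroot ▸ hv
    have h1 : v ∈ T.desc (T.parent v) := ⟨1, by simp⟩
    have h2 : v ∈ T'.desc (T'.parent v) := ⟨1, by simp⟩
    have h3 : v ∈ T'.desc (T.parent v) := (hdesc _) ▸ h1
    have h4 : v ∈ T.desc (T'.parent v) := (hdesc _).symm ▸ h2
    obtain ⟨i, hi⟩ := h3
    obtain ⟨i', hi'⟩ := h4
    have hi0 : i ≠ 0 := by
      rintro rfl
      exact hv (T.eq_root_of_parent_fixed (by simpa using hi.symm))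
    have hi0' : i' ≠ 0 := by
      rintro rfl
      exact hv' (T'.eq_root_of_parent_fixed (by simpa using hi'.symm))
    obtain ⟨j, rfl⟩ := Nat.exists_eq_succ_of_ne_zero hi0
    obtain ⟨j', rfl⟩ := Nat.exists_eq_succ_of_ne_zero hi0'
    have hA : T'.parent v ∈ T'.desc (T.parent v) := by
      refine ⟨j, ?_⟩
      show T'.parent^[j] (T'.parent v) = T.parent v
      rw [← Function.iterate_succ_apply]
      exact hi
    have hB : T.parent v ∈ T.desc (T'.parent v) := by
      refine ⟨j', ?_⟩
      show T.parent^[j'] (T.parent v) = T'.parent v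
      rw [← Function.iterate_succ_apply]
      exact hi'
    exact T.desc_antisymm hB ((hdesc _).symm ▸ hA)
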